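/- Let 𝓗 = (V, 𝓔) be a hypergraph with V̄ = ⋃𝓔 having at least 2 elements. If for all 2-element subsets e, e' of V̄ the identification hypergraphs 𝓗_e and 𝓗_{e'} are isomorphic, then the Boolean function f_𝓗 is irreducible. -/

import Mathlib

open Finset

abbrev BF := Σ n : ℕ, (Fin n → Bool) → Bool

def Minor (g f : BF) : Prop :=
  ∃ σ : Fin f.1 → Fin g.1, ∀ a : Fin g.1 → Bool, g.2 a = f.2 (a ∘ σ)

def EquivBF (f g : BF) : Prop := Minor f g ∧ Minor g f

def StrictMinor (g f : BF) : Prop := Minor g f ∧ ¬ Minor f g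

def Essential {n : ℕ} (f : (Fin n → Bool) → Bool) (i : Fin n) : Prop :=
  ∃ a b : Fin n → Bool, (∀ j, j ≠ i → a j = b j) ∧ f a ≠ f b

noncomputable def essArity {n : ℕ} (f : (Fin n → Bool) → Bool) : ℕ :=
  Nat.card {i : Fin n // Essential f i}

noncomputable def gapBF (f : BF) : ℕ :=
  sInf {d | ∃ g : BF, StrictMinor g f ∧ d = essArity f.2 - essArity g.2}

def fH {n : ℕ} (𝓔 : Finset (Finset (Fin n))) : (Fin n → Bool) → Bool :=
  fun a => decide (Odd (𝓔.filter (fun E => ∀ i ∈ E, a i = true)).card)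

def IsQuotientMap {n m : ℕ} (𝓔 : Finset (Finset (Fin n)))
    (𝓔' : Finset (Finset (Fin m))) (h : Fin m → Fin n) : Prop :=
  ∀ s : Finset (Fin n), s ∈ 𝓔 ↔ Odd (𝓔'.filter (fun t => t.image h = s)).card

abbrev HG := Σ n : ℕ, Finset (Finset (Fin n))

def HMinor (H H' : HG) : Prop := ∃ h : Fin H'.1 → Fin H.1, IsQuotientMap H.2 H'.2 h

def identEdges {n : ℕ} (𝓔 : Finset (Finset (Fin n))) (i j : Fin n) :
    Finset (Finset (Fin n)) :=
  Finset.univ.filter (fun E => j ∉ E ∧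
    ((i ∉ E ∧ E ∈ 𝓔) ∨
     (i ∈ E ∧ Odd ((if insert j E ∈ 𝓔 then 1 else 0) +
        (if E ∈ 𝓔 then 1 else 0) + (if insert j (E.erase i) ∈ 𝓔 then 1 else 0)))))

def EdgeIso {n : ℕ} (𝓔 𝓔' : Finset (Finset (Fin n))) : Prop :=
  ∃ φ : Fin n ≃ Fin n, ∀ s : Finset (Fin n), s.image φ ∈ 𝓔' ↔ s ∈ 𝓔

def IrreducibleBF (f : BF) : Prop :=
  ∃ f' : BF, StrictMinor f' f ∧ ∀ g : BF, StrictMinor g f → Minor g f'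

namespace Aux
variable {n : ℕ}


lemma odd_iff_cast {c : ℕ} : Odd c ↔ (c : ZMod 2) = 1 := by
  rw [Nat.odd_iff, ← ZMod.natCast_mod c 2]
  rcases Nat.mod_two_eq_zero_or_one c with h | h <;> rw [h] <;> simp


noncomputable def S (𝓔 : Finset (Finset (Fin n))) (a : Fin n → Bool) : ZMod 2 :=
  ∑ E ∈ 𝓔, if (∀ i ∈ E, a i = true) then 1 else 0

lemma fH_iff_S (𝓔 : Finset (Finset (Fin n))) (a : Fin n → Bool) :
    fH 𝓔 a = true ↔ S 𝓔 a = 1 := by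
  rw [fH, decide_eq_true_iff, odd_iff_cast, card_filter, S, Nat.cast_sum]
  norm_num

lemma fH_eq_of_S_eq {𝓔 𝓔' : Finset (Finset (Fin n))} {a b : Fin n → Bool}
    (h : S 𝓔 a = S 𝓔' b) : fH 𝓔 a = fH 𝓔' b := by
  rw [Bool.eq_iff_iff, fH_iff_S, fH_iff_S, h]

lemma fH_congr (𝓔 : Finset (Finset (Fin n))) {a b : Fin n → Bool}
    (hab : ∀ k ∈ 𝓔.sup id, a k = b k) : fH 𝓔 a = fH 𝓔 b := by
  apply fH_eq_of_S_eq
  unfold S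
  apply Finset.sum_congr rfl
  intro E hE
  have hsub : E ⊆ 𝓔.sup id := Finset.le_sup (f := id) hE
  congr 1
  apply propext
  constructor <;> intro h i hi
  · rw [← hab i (hsub hi)]; exact h i hi
  · rw [hab i (hsub hi)]; exact h i hi




def hmap (i j : Fin n) : Fin n → Fin n := fun k => if k = j then i else k

lemma hmap_ne {i j : Fin n} (hij : i ≠ j) (k : Fin n) : hmap i j k ≠ j := by
  unfold hmap; split
  · exact hij
  · assumption

lemma not_mem_image_hmap {i j : Fin n} (hij : i ≠ j) (E : Finset (Fin n)) :
    j ∉ E.image (hmap i j) := by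
  simp only [mem_image, not_exists]
  rintro k ⟨hk, heq⟩
  exact hmap_ne hij k heq

lemma image_hmap_of_not_mem {i j : Fin n} {E : Finset (Fin n)} (hj : j ∉ E) :
    E.image (hmap i j) = E := by
  apply Finset.image_congr (g := id) ?_ |>.trans (Finset.image_id)
  intro k hk
  have : k ≠ j := fun h => hj (h ▸ hk)
  simp [hmap, this]

lemma image_hmap_char {i j : Fin n} (hij : i ≠ j) {E E' : Finset (Fin n)} (hjE' : j ∉ E') :
    E.image (hmap i j) = E' ↔
      ((j ∉ E ∧ E = E') ∨
       (j ∈ E ∧ i ∈ E' ∧ (E = insert j E' ∨ E = insert j (E'.erase i)))) := by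
  have hji : (j : Fin n) ≠ i := fun h => hij h.symm
  constructor
  · intro himg
    by_cases hjE : j ∈ E
    · right
      have hE : E = insert j (E.erase j) := (Finset.insert_erase hjE).symm
      have himg2 : E.image (hmap i j) = insert i (E.erase j) := by
        conv_lhs => rw [hE]
        rw [Finset.image_insert, image_hmap_of_not_mem (Finset.notMem_erase j E)]
        simp [hmap]
      have hE' : E' = insert i (E.erase j) := by rw [← himg, himg2]
      refine ⟨hjE, by rw [hE']; exact mem_insert_self i _, ?_⟩
      by_cases hiE : i ∈ E.erase j
      · left
        rw [hE', Finset.insert_eq_self.mpr hiE, ← hE]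
      · right
        rw [hE', Finset.erase_insert hiE, ← hE]
    · left; exact ⟨hjE, by rw [← himg, image_hmap_of_not_mem hjE]⟩
  · rintro (⟨hjE, rfl⟩ | ⟨hjE, hiE', rfl | rfl⟩)
    · exact image_hmap_of_not_mem hjE
    · rw [Finset.image_insert, image_hmap_of_not_mem hjE']
      have : hmap i j j = i := by simp [hmap]
      rw [this, Finset.insert_eq_self.mpr hiE']
    · rw [Finset.image_insert,
        image_hmap_of_not_mem (fun h => hjE' (Finset.mem_of_mem_erase h))]
      have : hmap i j j = i := by simp [hmap]
      rw [this, Finset.insert_erase hiE']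

lemma cast_eq_ite_odd (c : ℕ) : (c : ZMod 2) = if Odd c then 1 else 0 := by
  split
  · rename_i h
    rw [Nat.odd_iff] at h
    rw [← ZMod.natCast_mod c 2, h, Nat.cast_one]
  · rename_i h
    rw [Nat.odd_iff] at h
    have : c % 2 = 0 := by omega
    rw [← ZMod.natCast_mod c 2, this, Nat.cast_zero]

lemma fiber_card (𝓔 : Finset (Finset (Fin n))) {i j : Fin n} (hij : i ≠ j)
    (E' : Finset (Fin n)) :
    ((𝓔.filter (fun E => E.image (hmap i j) = E')).card : ZMod 2)
      = if E' ∈ identEdges 𝓔 i j then 1 else 0 := by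
  by_cases hjE' : j ∈ E'
  · have h1 : 𝓔.filter (fun E => E.image (hmap i j) = E') = ∅ := by
      apply filter_eq_empty_iff.mpr
      intro E _ heq
      exact not_mem_image_hmap hij E (heq ▸ hjE')
    have h2 : E' ∉ identEdges 𝓔 i j := by
      simp only [identEdges, mem_filter]; tauto
    rw [h1]; simp [h2]
  · by_cases hiE' : i ∈ E'
    · have hne1 : E' ≠ insert j E' := by
        intro h; exact hjE' (h ▸ mem_insert_self j E')
      have hne2 : E' ≠ insert j (E'.erase i) := by
        intro h; exact hjE' (h ▸ mem_insert_self j _)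
      have hne3 : insert j E' ≠ insert j (E'.erase i) := by
        intro h
        have hi1 : i ∈ insert j E' := mem_insert_of_mem hiE'
        rw [h, mem_insert] at hi1
        rcases hi1 with h' | h'
        · exact hij h'
        · exact Finset.notMem_erase i E' h'
      have hfil : 𝓔.filter (fun E => E.image (hmap i j) = E')
          = Finset.filter (fun E => E ∈ 𝓔)
              (insert E' (insert (insert j E') ({insert j (E'.erase i)} : Finset (Finset (Fin n))))) := by
        ext E
        simp only [mem_filter, mem_insert, mem_singleton]
        rw [image_hmap_char hij hjE']
        constructor
        · rintro ⟨hE, (⟨_, rfl⟩ | ⟨_, _, rfl | rfl⟩)⟩ <;> tauto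
        · rintro ⟨(rfl | rfl | rfl), hE⟩
          · exact ⟨hE, Or.inl ⟨hjE', rfl⟩⟩
          · exact ⟨hE, Or.inr ⟨mem_insert_self _ _, hiE', Or.inl rfl⟩⟩
          · exact ⟨hE, Or.inr ⟨mem_insert_self _ _, hiE', Or.inr rfl⟩⟩
      have hmem : E' ∈ identEdges 𝓔 i j ↔ Odd ((if insert j E' ∈ 𝓔 then 1 else 0) +
          (if E' ∈ 𝓔 then 1 else 0) + (if insert j (E'.erase i) ∈ 𝓔 then 1 else 0)) := by
        simp only [identEdges, mem_filter, mem_univ, true_and]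
        constructor
        · rintro ⟨-, (⟨h, -⟩ | ⟨-, h⟩)⟩
          · exact absurd hiE' h
          · exact h
        · intro h
          exact ⟨hjE', Or.inr ⟨hiE', h⟩⟩
      rw [hfil, card_filter, Finset.sum_insert, Finset.sum_insert, Finset.sum_singleton]
      · have : (if E' ∈ identEdges 𝓔 i j then (1 : ZMod 2) else 0)
            = if Odd ((if insert j E' ∈ 𝓔 then 1 else 0) +
                (if E' ∈ 𝓔 then 1 else 0) +
                (if insert j (E'.erase i) ∈ 𝓔 then 1 else 0)) then (1 : ZMod 2) else 0 := by
          simp only [hmem]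
        rw [this, ← cast_eq_ite_odd]
        simp only [Nat.cast_add, apply_ite (Nat.cast : ℕ → ZMod 2), Nat.cast_one, Nat.cast_zero]
        ring
      · simp only [mem_singleton]; exact hne3
      · simp only [mem_insert, mem_singleton]
        push_neg
        exact ⟨hne1, hne2⟩
    · have hfil : 𝓔.filter (fun E => E.image (hmap i j) = E')
          = 𝓔.filter (fun E => E = E') := by
        apply filter_congr
        intro E hE
        rw [image_hmap_char hij hjE']
        constructor
        · rintro (⟨-, rfl⟩ | ⟨-, h, -⟩)
          · rfl
          · exact absurd h hiE'
        · rintro rfl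
          exact Or.inl ⟨hjE', rfl⟩
      have hmem : E' ∈ identEdges 𝓔 i j ↔ E' ∈ 𝓔 := by
        simp only [identEdges, mem_filter, mem_univ, true_and]
        constructor
        · rintro ⟨-, (⟨-, h⟩ | ⟨h, -⟩)⟩
          · exact h
          · exact absurd h hiE'
        · intro h
          exact ⟨hjE', Or.inl ⟨hiE', h⟩⟩
      rw [hfil, Finset.filter_eq']
      simp only [hmem]
      split <;> simp


lemma S_ident (𝓔 : Finset (Finset (Fin n))) {i j : Fin n} (hij : i ≠ j)
    {b : Fin n → Bool} (hb : b i = b j) :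
    S (identEdges 𝓔 i j) b = S 𝓔 b := by
  classical
  have hbk : ∀ k, b (hmap i j k) = b k := by
    intro k
    unfold hmap
    split
    · rename_i h; rw [h, hb]
    · rfl
  have hind : ∀ E : Finset (Fin n),
      (if (∀ k ∈ E, b k = true) then (1 : ZMod 2) else 0)
        = if (∀ k ∈ E.image (hmap i j), b k = true) then 1 else 0 := by
    intro E
    congr 1
    apply propext
    rw [Finset.forall_mem_image]
    constructor <;> intro h k hk
    · rw [hbk]; exact h k hk
    · rw [← hbk k]; exact h hk
  have key : S 𝓔 b = ∑ E' ∈ (univ : Finset (Finset (Fin n))),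
      ((𝓔.filter (fun E => E.image (hmap i j) = E')).card : ZMod 2) *
        (if (∀ k ∈ E', b k = true) then 1 else 0) := by
    unfold S
    rw [Finset.sum_congr rfl (fun E _ => hind E)]
    have hfib := Finset.sum_fiberwise_of_maps_to (s := 𝓔)
        (t := (univ : Finset (Finset (Fin n)))) (g := fun E => E.image (hmap i j))
        (fun E _ => mem_univ _)
        (fun E => if (∀ k ∈ E.image (hmap i j), b k = true) then (1 : ZMod 2) else 0)
    rw [← hfib]
    apply Finset.sum_congr rfl
    intro E' _
    have : ∀ E ∈ 𝓔.filter (fun E => E.image (hmap i j) = E'),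
        (if (∀ k ∈ E.image (hmap i j), b k = true) then (1 : ZMod 2) else 0)
          = if (∀ k ∈ E', b k = true) then 1 else 0 := by
      intro E hE
      rw [(mem_filter.mp hE).2]
    rw [Finset.sum_congr rfl this, Finset.sum_const, nsmul_eq_mul]
  rw [key]
  have : ∀ E' ∈ (univ : Finset (Finset (Fin n))),
      ((𝓔.filter (fun E => E.image (hmap i j) = E')).card : ZMod 2) *
        (if (∀ k ∈ E', b k = true) then 1 else 0)
      = if E' ∈ identEdges 𝓔 i j then (if (∀ k ∈ E', b k = true) then (1 : ZMod 2) else 0)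
          else 0 := by
    intro E' _
    rw [fiber_card 𝓔 hij E', ite_mul, one_mul, zero_mul]
  rw [Finset.sum_congr rfl this, Finset.sum_ite_mem, Finset.univ_inter]
  rfl

lemma fH_ident (𝓔 : Finset (Finset (Fin n))) {i j : Fin n} (hij : i ≠ j)
    {b : Fin n → Bool} (hb : b i = b j) :
    fH (identEdges 𝓔 i j) b = fH 𝓔 b :=
  fH_eq_of_S_eq (S_ident 𝓔 hij hb)

lemma sup_ident_subset {𝓔 : Finset (Finset (Fin n))} {i j : Fin n}
    (hi : i ∈ 𝓔.sup id) (hij : i ≠ j) :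
    (identEdges 𝓔 i j).sup id ⊆ (𝓔.sup id).erase j := by
  intro k hk
  rw [Finset.mem_sup] at hk
  obtain ⟨E, hE, hkE⟩ := hk
  rw [identEdges, mem_filter] at hE
  obtain ⟨-, hjE, hcases⟩ := hE
  have hkj : k ≠ j := fun h => hjE (h ▸ hkE)
  rw [Finset.mem_erase]
  refine ⟨hkj, ?_⟩
  rcases hcases with ⟨-, hEm⟩ | ⟨hiE, hodd⟩
  · exact Finset.mem_sup.mpr ⟨E, hEm, hkE⟩
  · have h3 : insert j E ∈ 𝓔 ∨ E ∈ 𝓔 ∨ insert j (E.erase i) ∈ 𝓔 := by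
      by_contra hcon
      push_neg at hcon
      obtain ⟨h1, h2, h3⟩ := hcon
      simp [h1, h2, h3] at hodd
    rcases h3 with h | h | h
    · exact Finset.mem_sup.mpr ⟨insert j E, h, mem_insert_of_mem hkE⟩
    · exact Finset.mem_sup.mpr ⟨E, h, hkE⟩
    · by_cases hki : k = i
      · exact hki ▸ hi
      · exact Finset.mem_sup.mpr ⟨insert j (E.erase i), h,
          mem_insert_of_mem (Finset.mem_erase.mpr ⟨hki, hkE⟩)⟩

lemma exists_essential_of_ne_aux {m : ℕ} (f : (Fin m → Bool) → Bool) :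
    ∀ (c : ℕ) (u v : Fin m → Bool), (univ.filter (fun p => u p ≠ v p)).card = c →
      f u ≠ f v → ∃ p, u p ≠ v p ∧ Essential f p := by
  classical
  intro c
  induction c using Nat.strong_induction_on with
  | _ c ih =>
    intro u v hc huv
    have hne : u ≠ v := fun h => huv (by rw [h])
    obtain ⟨p, hpne⟩ := Function.ne_iff.mp hne
    have hp : p ∈ univ.filter (fun p => u p ≠ v p) := mem_filter.mpr ⟨mem_univ p, hpne⟩
    set w := Function.update u p (v p) with hw
    by_cases hfw : f u = f w
    · have hwv : f w ≠ f v := by rw [← hfw]; exact huv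
      have hsub : univ.filter (fun q => w q ≠ v q)
          ⊆ (univ.filter (fun q => u q ≠ v q)).erase p := by
        intro q hq
        rcases mem_filter.mp hq with ⟨-, hq2⟩
        have hqp : q ≠ p := by
          intro h
          apply hq2
          rw [h, hw, Function.update_self]
        refine Finset.mem_erase.mpr ⟨hqp, mem_filter.mpr ⟨mem_univ q, ?_⟩⟩
        rwa [hw, Function.update_of_ne hqp] at hq2
      have hcard : (univ.filter (fun q => w q ≠ v q)).card < c := by
        calc (univ.filter (fun q => w q ≠ v q)).card
            ≤ ((univ.filter (fun q => u q ≠ v q)).erase p).card := Finset.card_le_card hsub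
          _ < (univ.filter (fun q => u q ≠ v q)).card := Finset.card_erase_lt_of_mem hp
          _ = c := hc
      obtain ⟨q, hq1, hq2⟩ := ih _ hcard w v rfl hwv
      have hqp : q ≠ p := by
        intro h
        apply hq1
        rw [h, hw, Function.update_self]
      rw [hw, Function.update_of_ne hqp] at hq1
      exact ⟨q, hq1, hq2⟩
    · refine ⟨p, hpne, u, w, ?_, fun h => hfw h⟩
      intro q hq
      rw [hw, Function.update_of_ne hq]

lemma exists_essential_of_ne {m : ℕ} (f : (Fin m → Bool) → Bool) {u v : Fin m → Bool}
    (h : f u ≠ f v) : ∃ p, u p ≠ v p ∧ Essential f p :=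
  exists_essential_of_ne_aux f _ u v rfl h

lemma minor_essArity_le {g f : BF} (h : Minor g f) : essArity g.2 ≤ essArity f.2 := by
  classical
  obtain ⟨σ, hσ⟩ := h
  have key : ∀ k : {i // Essential g.2 i}, ∃ p : Fin f.1, σ p = k.1 ∧ Essential f.2 p := by
    rintro ⟨k, a, b, hab, hfab⟩
    have hne : f.2 (a ∘ σ) ≠ f.2 (b ∘ σ) := by rw [← hσ a, ← hσ b]; exact hfab
    obtain ⟨p, hp1, hp2⟩ := exists_essential_of_ne f.2 hne
    have hσp : σ p = k := by
      by_contra hne2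
      exact hp1 (hab (σ p) hne2)
    exact ⟨p, hσp, hp2⟩
  choose φ hφ1 hφ2 using key
  have hinj : Function.Injective (fun k => (⟨φ k, hφ2 k⟩ : {p // Essential f.2 p})) := by
    intro k1 k2 h12
    have : φ k1 = φ k2 := congrArg Subtype.val h12
    have : σ (φ k1) = σ (φ k2) := congrArg σ this
    rw [hφ1 k1, hφ1 k2] at this
    exact Subtype.ext this
  exact Nat.card_le_card_of_injective _ hinj

lemma not_essential_fH {𝓔 : Finset (Finset (Fin n))} {k : Fin n}
    (hk : k ∉ 𝓔.sup id) : ¬ Essential (fH 𝓔) k := by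
  rintro ⟨a, b, hab, hfab⟩
  apply hfab
  apply fH_congr
  intro p hp
  exact hab p (fun h => hk (h ▸ hp))

lemma essential_fH {𝓔 : Finset (Finset (Fin n))} {k : Fin n}
    (hk : k ∈ 𝓔.sup id) : Essential (fH 𝓔) k := by
  classical
  obtain ⟨E₁, hE₁, hkE₁⟩ := Finset.mem_sup.mp hk
  set 𝓔k := (𝓔.filter (fun E => k ∈ E)).image (fun E => E.erase k) with h𝓔k
  have hne : 𝓔k.Nonempty :=
    ⟨E₁.erase k, mem_image_of_mem _ (mem_filter.mpr ⟨hE₁, hkE₁⟩)⟩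
  obtain ⟨M, hM, hmin⟩ : ∃ M ∈ 𝓔k, ∀ x ∈ 𝓔k, ¬ x < M := by
    obtain ⟨M, hM⟩ := Finset.exists_minimal hne
    exact ⟨M, hM.prop, fun x hx hlt => hM.not_lt hx hlt⟩
  have hkM : k ∉ M := by
    obtain ⟨E, -, rfl⟩ := mem_image.mp hM
    exact Finset.notMem_erase k E
  have hins : insert k M ∈ 𝓔 := by
    obtain ⟨E, hE, rfl⟩ := mem_image.mp hM
    rcases mem_filter.mp hE with ⟨hE1, hE2⟩
    rwa [Finset.insert_erase hE2]
  set u := fun p => decide (p ∈ insert k M) with hu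
  set v := fun p => decide (p ∈ M) with hv
  refine ⟨u, v, ?_, ?_⟩
  · intro q hq
    simp only [hu, hv, Finset.mem_insert, decide_eq_decide]
    constructor
    · rintro (h | h)
      · exact absurd h hq
      · exact h
    · exact Or.inr
  · have h1 : 𝓔.filter (fun E => ∀ i ∈ E, u i = true)
        = 𝓔.filter (fun E => E ⊆ insert k M) := by
      apply filter_congr
      intro E _
      simp only [hu, decide_eq_true_iff]
      exact Finset.subset_iff.symm
    have h2 : 𝓔.filter (fun E => ∀ i ∈ E, v i = true)
        = 𝓔.filter (fun E => E ⊆ M) := by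
      apply filter_congr
      intro E _
      simp only [hv, decide_eq_true_iff]
      exact Finset.subset_iff.symm
    have hclaim : 𝓔.filter (fun E => E ⊆ insert k M)
        = insert (insert k M) (𝓔.filter (fun E => E ⊆ M)) := by
      ext E
      simp only [mem_filter, mem_insert]
      constructor
      · rintro ⟨hE, hsub⟩
        by_cases hkE : k ∈ E
        · left
          have hEk : E.erase k ∈ 𝓔k := mem_image_of_mem _ (mem_filter.mpr ⟨hE, hkE⟩)
          have hsub2 : E.erase k ⊆ M := by
            intro x hx
            rcases Finset.mem_erase.mp hx with ⟨hxk, hxE⟩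
            rcases Finset.mem_insert.mp (hsub hxE) with h | h
            · exact absurd h hxk
            · exact h
          have hEM : E.erase k = M := by
            by_contra hne2
            exact hmin _ hEk (Finset.lt_iff_ssubset.mpr
              (Finset.ssubset_iff_subset_ne.mpr ⟨hsub2, hne2⟩))
          rw [← hEM, Finset.insert_erase hkE]
        · right
          refine ⟨hE, fun x hx => ?_⟩
          rcases Finset.mem_insert.mp (hsub hx) with h | h
          · exact absurd (h ▸ hx) hkE
          · exact h
      · rintro (rfl | ⟨hE, hsub⟩)
        · exact ⟨hins, Finset.Subset.refl _⟩
        · exact ⟨hE, hsub.trans (Finset.subset_insert k M)⟩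
    have hnm : insert k M ∉ 𝓔.filter (fun E => E ⊆ M) := by
      intro h
      exact hkM ((mem_filter.mp h).2 (mem_insert_self k M))
    intro heq
    simp only [fH, decide_eq_decide] at heq
    rw [h1, h2, hclaim, Finset.card_insert_of_notMem hnm, Nat.odd_add_one] at heq
    tauto

lemma essArity_fH (𝓔 : Finset (Finset (Fin n))) :
    essArity (fH 𝓔) = (𝓔.sup id).card := by
  classical
  rw [essArity, Nat.card_eq_fintype_card, Fintype.card_subtype]
  congr 1
  ext p
  simp only [mem_filter, mem_univ, true_and]
  constructor
  · intro h
    by_contra hp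
    exact not_essential_fH hp h
  · exact essential_fH

lemma minor_of_edgeIso {𝓔₁ 𝓔₂ : Finset (Finset (Fin n))} (h : EdgeIso 𝓔₁ 𝓔₂) :
    Minor ⟨n, fH 𝓔₁⟩ ⟨n, fH 𝓔₂⟩ := by
  obtain ⟨φ, hφ⟩ := h
  refine ⟨fun k => φ.symm k, fun a => ?_⟩
  apply fH_eq_of_S_eq
  unfold S
  refine Finset.sum_bij' (fun E _ => E.image φ)
    (fun E _ => E.image (fun k => φ.symm k)) ?_ ?_ ?_ ?_ ?_
  · intro E hE; exact (hφ E).mpr hE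
  · intro E hE
    rw [← hφ]
    have himg : (E.image (fun k => φ.symm k)).image (fun k : Fin n => φ k) = E := by
      rw [Finset.image_image]
      simp
    rwa [himg]
  · intro E hE; rw [Finset.image_image]; simp
  · intro E hE; rw [Finset.image_image]; simp
  · intro E hE
    congr 1
    apply propext
    rw [Finset.forall_mem_image]
    simp

lemma minor_trans {g X f' : BF} (h1 : Minor g X) (h2 : Minor X f') : Minor g f' := by
  obtain ⟨σ₁, hσ₁⟩ := h1
  obtain ⟨σ₂, hσ₂⟩ := h2
  exact ⟨σ₁ ∘ σ₂, fun a => by rw [hσ₁ a, hσ₂ (a ∘ σ₁)]; rfl⟩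

end Aux

theorem all_identifications_isomorphic_implies_irreducible (n : ℕ)
    (𝓔 : Finset (Finset (Fin n))) (h2 : 2 ≤ (𝓔.sup id).card)
    (hiso : ∀ i j i' j' : Fin n, i ≠ j → i' ≠ j' →
      i ∈ 𝓔.sup id → j ∈ 𝓔.sup id → i' ∈ 𝓔.sup id → j' ∈ 𝓔.sup id →
      EdgeIso (identEdges 𝓔 i j) (identEdges 𝓔 i' j')) :
    IrreducibleBF ⟨n, fH 𝓔⟩ := by
  classical
  obtain ⟨i₀, hi₀, j₀, hj₀, hij₀⟩ := Finset.one_lt_card.mp (by omega : 1 < (𝓔.sup id).card)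
  set 𝓔' := identEdges 𝓔 i₀ j₀ with h𝓔'
  refine ⟨⟨n, fH 𝓔'⟩, ⟨⟨fun k => Aux.hmap i₀ j₀ k, ?_⟩, ?_⟩, ?_⟩
  · intro a
    have h1 : (a ∘ fun k => Aux.hmap i₀ j₀ k) i₀ = (a ∘ fun k => Aux.hmap i₀ j₀ k) j₀ := by
      simp [Aux.hmap, hij₀]
    calc fH 𝓔' a = fH 𝓔' (a ∘ fun k => Aux.hmap i₀ j₀ k) := by
          apply Aux.fH_congr
          intro p hp
          have hpj : p ≠ j₀ := (Finset.mem_erase.mp (Aux.sup_ident_subset hi₀ hij₀ hp)).1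
          simp [Aux.hmap, hpj]
      _ = fH 𝓔 (a ∘ fun k => Aux.hmap i₀ j₀ k) := Aux.fH_ident 𝓔 hij₀ h1
  · intro hmin
    have hle := Aux.minor_essArity_le hmin
    simp only [Aux.essArity_fH] at hle
    have hsub : (𝓔'.sup id) ⊆ (𝓔.sup id).erase j₀ := Aux.sup_ident_subset hi₀ hij₀
    have hlt : ((𝓔.sup id).erase j₀).card < (𝓔.sup id).card :=
      Finset.card_erase_lt_of_mem hj₀
    have hcc := Finset.card_le_card hsub
    omega
  · rintro g ⟨⟨σ, hσ⟩, hnm⟩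
    have hex : ∃ i j : Fin n, i ∈ 𝓔.sup id ∧ j ∈ 𝓔.sup id ∧ i ≠ j ∧ σ i = σ j := by
      by_contra hcon
      push_neg at hcon
      apply hnm
      have hex2 : ∀ p : Fin g.1, ∃ k : Fin n,
          (∃ k' ∈ 𝓔.sup id, σ k' = p) → (k ∈ 𝓔.sup id ∧ σ k = p) := by
        intro p
        by_cases h : ∃ k' ∈ 𝓔.sup id, σ k' = p
        · obtain ⟨k', hk1, hk2⟩ := h
          exact ⟨k', fun _ => ⟨hk1, hk2⟩⟩
        · exact ⟨i₀, fun hh => absurd hh h⟩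
      choose τ hτ using hex2
      refine ⟨τ, fun b => ?_⟩
      show fH 𝓔 b = g.2 (b ∘ τ)
      rw [hσ (b ∘ τ)]
      apply Aux.fH_congr
      intro k hk
      have h1 := hτ (σ k) ⟨k, hk, rfl⟩
      have h2 : τ (σ k) = k := by
        by_contra hne
        exact hcon (τ (σ k)) k h1.1 hk hne h1.2
      show b k = b (τ (σ k))
      rw [h2]
    obtain ⟨i, j, hi, hj, hij, hσij⟩ := hex
    have hg : Minor g ⟨n, fH (identEdges 𝓔 i j)⟩ := by
      refine ⟨σ, fun a => ?_⟩
      show g.2 a = fH (identEdges 𝓔 i j) (a ∘ σ)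
      rw [hσ a]
      have hab : (a ∘ σ) i = (a ∘ σ) j := by
        show a (σ i) = a (σ j)
        rw [hσij]
      exact (Aux.fH_ident 𝓔 hij hab).symm
    have hiso' := hiso i j i₀ j₀ hij hij₀ hi hj hi₀ hj₀
    exact Aux.minor_trans hg (Aux.minor_of_edgeIso hiso')
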